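/- Define H := ∑_{k=2}^∞ (1/k) ∑_{p prime} 1/p^k. Then H = −∑_{n=2}^∞ μ(n) ln(ζ(n))/n, i.e. H = (1/2)ln ζ(2) + (1/3)ln ζ(3) + (1/5)ln ζ(5) − (1/6)ln ζ(6) + ⋯, where μ is the Möbius function and ζ is the Riemann zeta function. -/

import Mathlib

open Real ArithmeticFunction

namespace MertensProof

noncomputable def pr (p : Nat.Primes) : ℝ := (((p : ℕ) : ℝ))⁻¹

lemma pr_pos (p : Nat.Primes) : 0 < pr p :=
  inv_pos.mpr (by exact_mod_cast p.prop.pos)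

lemma pr_le_half (p : Nat.Primes) : pr p ≤ 1 / 2 := by
  rw [pr, one_div]
  exact inv_anti₀ (by norm_num) (by exact_mod_cast p.prop.two_le)

lemma pr_lt_one (p : Nat.Primes) : pr p < 1 :=
  lt_of_le_of_lt (pr_le_half p) (by norm_num)

noncomputable def G (x : ℝ) (q : ℕ × ℕ) : ℝ :=
  if 2 ≤ q.1 then (-(moebius q.1 : ℝ)) * x ^ (q.1 * q.2) / ((q.1 * q.2 : ℕ) : ℝ) else 0

lemma abs_moebius_real (a : ℕ) : |(moebius a : ℝ)| ≤ 1 := by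
  exact_mod_cast ArithmeticFunction.abs_moebius_le_one (n := a)

lemma abs_G_le_pow {x : ℝ} (h0 : 0 ≤ x) (a b : ℕ) : |G x (a, b)| ≤ x ^ (a * b) := by
  rcases lt_or_ge a 2 with ha | ha
  · rw [G, if_neg (by simpa using by omega : ¬ 2 ≤ (a, b).1)]
    simpa using pow_nonneg h0 (a * b)
  rcases Nat.eq_zero_or_pos b with rfl | hb
  · rw [G, if_pos (by simpa using ha)]
    simp only [Nat.mul_zero, Nat.cast_zero, div_zero, abs_zero]
    positivity
  · rw [G, if_pos (by simpa using ha)]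
    have hd1 : (1 : ℝ) ≤ ((a * b : ℕ) : ℝ) := by
      exact_mod_cast Nat.one_le_iff_ne_zero.mpr (by positivity)
    rw [abs_div, abs_mul, abs_neg, abs_pow, abs_of_nonneg h0, Nat.abs_cast]
    calc |(moebius a : ℝ)| * x ^ (a * b) / ((a * b : ℕ) : ℝ)
        ≤ 1 * x ^ (a * b) / 1 := by
          gcongr
          · exact abs_moebius_real a
      _ = x ^ (a * b) := by ring

lemma aux_ineq {a b : ℕ} (ha : 2 ≤ a) (hb : 1 ≤ b) : a + b ≤ a * b + 1 := by
  nlinarith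

lemma G_abs_le {x : ℝ} (h0 : 0 < x) (h1 : x < 1) (q : ℕ × ℕ) :
    |G x q| ≤ x ^ q.1 * (x ^ q.2 * x⁻¹) := by
  obtain ⟨a, b⟩ := q
  have hM : (0:ℝ) ≤ x ^ a * (x ^ b * x⁻¹) := by positivity
  rcases lt_or_ge a 2 with ha | ha
  · rw [G, if_neg (by simpa using by omega : ¬ 2 ≤ (a, b).1)]
    simpa using hM
  rcases Nat.eq_zero_or_pos b with rfl | hb
  · rw [G, if_pos (by simpa using ha)]
    simp only [Nat.mul_zero, Nat.cast_zero, div_zero, abs_zero]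
    exact hM
  · refine (abs_G_le_pow h0.le a b).trans ?_
    have hab := aux_ineq ha hb
    have h2 : x ^ (a * b + 1) ≤ x ^ (a + b) := pow_le_pow_of_le_one h0.le h1.le hab
    calc x ^ (a * b) = x ^ (a * b + 1) * x⁻¹ := by
          rw [pow_succ, mul_assoc, mul_inv_cancel₀ h0.ne', mul_one]
      _ ≤ x ^ (a + b) * x⁻¹ := by gcongr
      _ = x ^ a * (x ^ b * x⁻¹) := by rw [pow_add, mul_assoc]

lemma summable_G {x : ℝ} (h0 : 0 < x) (h1 : x < 1) : Summable (G x) := by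
  refine Summable.of_norm_bounded ?_ (fun q => by
    simpa [Real.norm_eq_abs] using G_abs_le h0 h1 q)
  exact (summable_geometric_of_lt_one h0.le h1).mul_of_nonneg
    ((summable_geometric_of_lt_one h0.le h1).mul_right x⁻¹)
    (fun n => pow_nonneg h0.le n) (fun n => by positivity)

lemma G_fiber (x : ℝ) (m : ℕ) :
    (∑' (q : ((fun q : ℕ × ℕ => q.1 * q.2) ⁻¹' {m} : Set (ℕ × ℕ))), G x q)
      = if 2 ≤ m then x ^ m / (m : ℝ) else 0 := by
  rcases eq_or_ne m 0 with rfl | hm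
  · rw [if_neg (by omega)]
    have hz : ∀ q : ((fun q : ℕ × ℕ => q.1 * q.2) ⁻¹' {(0:ℕ)} : Set (ℕ × ℕ)),
        G x q = 0 := by
      rintro ⟨⟨a, b⟩, h⟩
      have h' : a * b = 0 := h
      rw [G]
      split
      · rw [show ((a,b).1 * (a,b).2) = 0 from h']
        simp
      · rfl
    rw [tsum_congr hz, tsum_zero]
  · have hset : ((fun q : ℕ × ℕ => q.1 * q.2) ⁻¹' {m} : Set (ℕ × ℕ))
        = ↑m.divisorsAntidiagonal := by
      ext q
      simp [Nat.mem_divisorsAntidiagonal, hm]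
    rw [hset, Finset.tsum_subtype' m.divisorsAntidiagonal (G x),
      show (∑ q ∈ m.divisorsAntidiagonal, G x q)
          = ∑ q ∈ m.divisorsAntidiagonal, (fun a b => G x (a, b)) q.1 q.2 from rfl,
      Nat.sum_divisorsAntidiagonal (fun a b => G x (a, b))]
    have hterm : ∀ d ∈ m.divisors,
        G x (d, m / d) = (if 2 ≤ d then -(moebius d : ℝ) else 0) * (x ^ m / (m : ℝ)) := by
      intro d hd
      obtain ⟨hdvd, -⟩ := Nat.mem_divisors.mp hd
      have hdm : d * (m / d) = m := Nat.mul_div_cancel' hdvd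
      rw [G]
      simp only
      rw [hdm]
      split
      · rw [mul_div_assoc]
      · rw [zero_mul]
    rw [Finset.sum_congr rfl hterm, ← Finset.sum_mul]
    have hdiv : (∑ d ∈ m.divisors, (if 2 ≤ d then -(moebius d : ℝ) else 0))
        = if 2 ≤ m then 1 else 0 := by
      rcases eq_or_lt_of_le (Nat.one_le_iff_ne_zero.mpr hm) with h1 | h2
      · rw [← h1]
        simp [Nat.divisors_one]
      · have hm1 : m ≠ 1 := by omega
        have hmu : (∑ d ∈ m.divisors, (moebius d : ℝ)) = 0 := by
          have hint : (∑ d ∈ m.divisors, moebius d) = (0 : ℤ) := by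
            have h2' := (ArithmeticFunction.coe_mul_zeta_apply
              (f := ArithmeticFunction.moebius) (x := m)).symm
            rwa [ArithmeticFunction.moebius_mul_coe_zeta, ArithmeticFunction.one_apply,
              if_neg hm1] at h2'
          exact_mod_cast hint
        have hterms : ∀ d ∈ m.divisors,
            (if 2 ≤ d then -(moebius d : ℝ) else 0)
              = -(moebius d : ℝ) + (if d = 1 then 1 else 0) := by
          intro d hd
          have hd1 : 1 ≤ d := Nat.pos_of_mem_divisors hd
          rcases Nat.lt_or_ge d 2 with h | h
          · have hd' : d = 1 := by omega
            subst hd'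
            simp [ArithmeticFunction.moebius_apply_one]
          · rw [if_pos h, if_neg (by omega : ¬ d = 1), add_zero]
        rw [Finset.sum_congr rfl hterms, Finset.sum_add_distrib]
        rw [Finset.sum_ite_eq' m.divisors 1 (fun _ => (1:ℝ))]
        rw [if_pos (Nat.one_mem_divisors.mpr hm)]
        rw [if_pos (by omega : 2 ≤ m)]
        rw [Finset.sum_neg_distrib, hmu]
        norm_num
    rw [hdiv]
    split_ifs <;> simp

lemma hasSum_key {x : ℝ} (h0 : 0 < x) (h1 : x < 1) :
    HasSum (fun k : ℕ => x ^ (k + 2) / ((k : ℝ) + 2)) (∑' q, G x q) := by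
  have hfib := (summable_G h0 h1).hasSum.tsum_fiberwise (fun q => q.1 * q.2)
  rw [funext (G_fiber x)] at hfib
  have h3 := (hasSum_nat_add_iff (f := fun m : ℕ => if 2 ≤ m then x ^ m / (m : ℝ) else 0) 2).mpr
    (by simpa [Finset.sum_range_succ] using hfib)
  have heq : (fun n : ℕ => if 2 ≤ n + 2 then x ^ (n + 2) / ((n + 2 : ℕ) : ℝ) else 0)
      = fun k : ℕ => x ^ (k + 2) / ((k : ℝ) + 2) := by
    funext n
    rw [if_pos (by omega)]
    push_cast
    ring
  rwa [heq] at h3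


noncomputable def zf (a : ℕ) (ha : a ≠ 0) : ℕ →*₀ ℝ where
  toFun m := ((m : ℝ))⁻¹ ^ a
  map_zero' := by simp [zero_pow ha]
  map_one' := by simp
  map_mul' x y := by push_cast; rw [mul_inv, mul_pow]

lemma summable_zf {a : ℕ} (ha : 2 ≤ a) :
    Summable (fun m => ‖zf a (by omega) m‖) := by
  refine (Real.summable_one_div_nat_pow.mpr (by omega : 1 < a)).congr fun m => ?_
  show 1 / (m : ℝ) ^ a = ‖((m : ℝ))⁻¹ ^ a‖
  rw [Real.norm_eq_abs, abs_of_nonneg (pow_nonneg (inv_nonneg.mpr (Nat.cast_nonneg m)) a),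
    inv_pow, one_div]

lemma summable_pr_sq : Summable (fun p : Nat.Primes => (pr p) ^ 2) := by
  have h := (Real.summable_one_div_nat_pow.mpr (by norm_num : 1 < 2)).comp_injective
    Nat.Primes.coe_nat_injective
  exact h.congr fun p => by
    simp only [Function.comp_apply, pr, inv_pow, one_div]

lemma hasSum_neg_log_primes {a : ℕ} (ha : 2 ≤ a) :
    HasSum (fun p : Nat.Primes => -Real.log (1 - pr p ^ a))
      (Real.log (∑' m : ℕ, 1 / ((m : ℝ) ^ a))) := by
  have ha0 : a ≠ 0 := by omega
  have hsummul : Summable (fun pj : Nat.Primes × ℕ => (pr pj.1) ^ 2 * (1/2 : ℝ) ^ pj.2) :=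
    summable_pr_sq.mul_of_nonneg (summable_geometric_of_lt_one (by norm_num) (by norm_num))
      (fun p => sq_nonneg _) (fun j => by positivity)
  have hFs : Summable (fun pj : Nat.Primes × ℕ => ((pr pj.1) ^ a) ^ (pj.2 + 1) / ((pj.2 : ℝ) + 1)) := by
    refine Summable.of_nonneg_of_le (fun pj => div_nonneg
      (pow_nonneg (pow_nonneg (pr_pos _).le _) _) (by positivity)) ?_ hsummul
    rintro ⟨p, j⟩
    have hp0 := (pr_pos p).le
    have hp1 := pr_lt_one p
    have h1 : ((pr p) ^ a) ^ (j + 1) ≤ (pr p) ^ 2 * (pr p) ^ j := by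
      rw [← pow_mul, ← pow_add]
      refine pow_le_pow_of_le_one hp0 hp1.le ?_
      calc 2 + j ≤ 2 * (j + 1) := by omega
        _ ≤ a * (j + 1) := Nat.mul_le_mul ha (le_refl (j + 1))
    have h3 : ((pr p) ^ a) ^ (j + 1) / ((j : ℝ) + 1) ≤ ((pr p) ^ a) ^ (j + 1) := by
      refine div_le_self (pow_nonneg (pow_nonneg hp0 _) _) ?_
      have := Nat.cast_nonneg (α := ℝ) j
      linarith
    calc ((pr p) ^ a) ^ (j + 1) / ((j : ℝ) + 1) ≤ ((pr p) ^ a) ^ (j + 1) := h3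
      _ ≤ (pr p) ^ 2 * (pr p) ^ j := h1
      _ ≤ (pr p) ^ 2 * (1/2 : ℝ) ^ j := by
          exact mul_le_mul_of_nonneg_left (pow_le_pow_left₀ hp0 (pr_le_half p) j) (sq_nonneg _)
  have hT := hFs.hasSum
  have hper : ∀ p : Nat.Primes,
      HasSum (fun j : ℕ => ((pr p) ^ a) ^ (j + 1) / ((j : ℝ) + 1)) (-Real.log (1 - (pr p) ^ a)) := by
    intro p
    have h : |(pr p) ^ a| < 1 := by
      rw [abs_of_nonneg (pow_nonneg (pr_pos p).le a)]
      exact pow_lt_one₀ (pr_pos p).le (pr_lt_one p) ha0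
    exact Real.hasSum_pow_div_log_of_abs_lt_one h
  have hlog : HasSum (fun p : Nat.Primes => -Real.log (1 - (pr p) ^ a))
      (∑' pj : Nat.Primes × ℕ, ((pr pj.1) ^ a) ^ (pj.2 + 1) / ((pj.2 : ℝ) + 1)) :=
    HasSum.prod_fiberwise hT hper
  have hz := EulerProduct.eulerProduct_completely_multiplicative_hasProd
    (f := zf a ha0) (summable_zf ha)
  have hexp := hlog.rexp
  have hco : (Real.exp ∘ fun p : Nat.Primes => -Real.log (1 - (pr p) ^ a))
      = fun p : Nat.Primes => (1 - zf a ha0 (p : ℕ))⁻¹ := by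
    funext p
    have hlt : (pr p) ^ a < 1 := pow_lt_one₀ (pr_pos p).le (pr_lt_one p) ha0
    have h1 : (0 : ℝ) < 1 - (pr p) ^ a := by linarith
    simp only [Function.comp_apply, Real.exp_neg, Real.exp_log h1]
    rfl
  rw [hco] at hexp
  have hTZ := hexp.unique hz
  have hZ : (∑' m : ℕ, zf a ha0 m) = ∑' m : ℕ, 1 / ((m : ℝ) ^ a) := by
    refine tsum_congr fun m => ?_
    show ((m : ℝ))⁻¹ ^ a = 1 / (m : ℝ) ^ a
    rw [inv_pow, one_div]
  rw [show Real.log (∑' m : ℕ, 1 / ((m : ℝ) ^ a))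
      = ∑' pj : Nat.Primes × ℕ, ((pr pj.1) ^ a) ^ (pj.2 + 1) / ((pj.2 : ℝ) + 1) by
    rw [← hZ, ← hTZ, Real.log_exp]]
  exact hlog


lemma G_pr_bound (p : Nat.Primes) (a b : ℕ) :
    |G (pr p) (a, b)| ≤ (1/2 : ℝ) ^ a * ((pr p) ^ 2 * ((1/2 : ℝ) ^ b * 8)) := by
  have h0 := pr_pos p
  have h1 := pr_lt_one p
  have hh := pr_le_half p
  have hM : (0:ℝ) ≤ (1/2 : ℝ) ^ a * ((pr p) ^ 2 * ((1/2 : ℝ) ^ b * 8)) := by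
    have := sq_nonneg (pr p); positivity
  rcases lt_or_ge a 2 with ha | ha
  · rw [G, if_neg (by simpa using by omega : ¬ 2 ≤ (a, b).1)]; simpa using hM
  rcases Nat.eq_zero_or_pos b with rfl | hb
  · rw [G, if_pos (by simpa using ha)]
    simp only [Nat.mul_zero, Nat.cast_zero, div_zero, abs_zero]
    exact hM
  · refine (abs_G_le_pow h0.le a b).trans ?_
    obtain ⟨u, hu⟩ : ∃ u, a + b = u + 3 := ⟨a + b - 3, by omega⟩
    have hab : a + b ≤ a * b + 1 := aux_ineq ha hb
    have hle : u + 2 ≤ a * b := by omega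
    calc (pr p) ^ (a * b) ≤ (pr p) ^ (u + 2) := pow_le_pow_of_le_one h0.le h1.le hle
      _ = (pr p) ^ 2 * (pr p) ^ u := by rw [pow_add, mul_comm]
      _ ≤ (pr p) ^ 2 * (1/2 : ℝ) ^ u :=
          mul_le_mul_of_nonneg_left (pow_le_pow_left₀ h0.le hh u) (sq_nonneg _)
      _ = (1/2 : ℝ) ^ a * ((pr p) ^ 2 * ((1/2 : ℝ) ^ b * 8)) := by
          have h8 : (1/2 : ℝ) ^ a * (1/2 : ℝ) ^ b = (1/2 : ℝ) ^ u * (1/8) := by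
            rw [← pow_add, hu, pow_add]; norm_num
          have h9 : (1/2 : ℝ) ^ a * ((pr p) ^ 2 * ((1/2 : ℝ) ^ b * 8))
              = ((1/2 : ℝ) ^ a * (1/2 : ℝ) ^ b) * ((pr p) ^ 2 * 8) := by ring
          rw [h9, h8]; ring

noncomputable def Phi (x : ℕ × (Nat.Primes × ℕ)) : ℝ := G (pr x.2.1) (x.1, x.2.2)

lemma summable_Phi : Summable Phi := by
  refine Summable.of_norm_bounded
    (g := fun x => (1/2 : ℝ) ^ x.1 * ((pr x.2.1) ^ 2 * ((1/2 : ℝ) ^ x.2.2 * 8))) ?_ ?_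
  · exact (summable_geometric_of_lt_one (by norm_num) (by norm_num)).mul_of_nonneg
      (summable_pr_sq.mul_of_nonneg
        ((summable_geometric_of_lt_one (by norm_num) (by norm_num)).mul_right 8)
        (fun p => sq_nonneg _) (fun b => by positivity))
      (fun a => by positivity) (fun y => mul_nonneg (sq_nonneg _) (by positivity))
  · rintro ⟨a, p, b⟩
    simpa [Real.norm_eq_abs, Phi] using G_pr_bound p a b

lemma inj_mk {β γ : Type*} (b : β) : Function.Injective (fun c : γ => (b, c)) :=
  fun x y h => congrArg Prod.snd h

def reorder : (ℕ × (Nat.Primes × ℕ)) ≃ (Nat.Primes × (ℕ × ℕ)) where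
  toFun x := (x.2.1, (x.1, x.2.2))
  invFun y := (y.2.1, (y.1, y.2.2))
  left_inv := fun ⟨a, p, b⟩ => rfl
  right_inv := fun ⟨p, a, b⟩ => rfl


end MertensProof

open MertensProof ArithmeticFunction

/-- Mertens' constant `H = ∑_{k ≥ 2} (1/k) ∑_p 1/p^k`. -/
noncomputable def mertensH : ℝ :=
  ∑' k : ℕ, (1 / ((k : ℝ) + 2)) * ∑' p : Nat.Primes, 1 / ((p : ℕ) : ℝ) ^ (k + 2)

theorem mertensH_eq_moebius_series :
    mertensH = -∑' n : ℕ,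
      (ArithmeticFunction.moebius (n + 2) : ℝ)
        * Real.log (∑' m : ℕ, 1 / ((m : ℝ) ^ (n + 2))) / ((n : ℝ) + 2) := by
  classical
  have hΦ := summable_Phi
  -- step 0
  have step0 : mertensH = ∑' (k : ℕ) (p : Nat.Primes), (pr p) ^ (k + 2) / ((k : ℝ) + 2) := by
    rw [mertensH]
    refine tsum_congr fun k => ?_
    rw [← tsum_mul_left]
    refine tsum_congr fun p => ?_
    rw [pr, inv_pow]
    ring
  -- summable ψ on ℕ × P
  have hψ : Summable (fun x : ℕ × Nat.Primes => (pr x.2) ^ (x.1 + 2) / ((x.1 : ℝ) + 2)) := by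
    refine Summable.of_nonneg_of_le
      (fun x => div_nonneg (pow_nonneg (pr_pos _).le _) (by positivity)) ?_
      ((summable_geometric_of_lt_one (by norm_num) (by norm_num : (1/2:ℝ) < 1)).mul_of_nonneg
        summable_pr_sq (fun k => by positivity) (fun p => sq_nonneg _))
    rintro ⟨k, p⟩
    have h0 := pr_pos p
    have hh := pr_le_half p
    calc (pr p) ^ (k + 2) / ((k : ℝ) + 2) ≤ (pr p) ^ (k + 2) := by
          refine div_le_self (pow_nonneg h0.le _) ?_
          have := Nat.cast_nonneg (α := ℝ) k
          linarith
      _ = (pr p) ^ k * (pr p) ^ 2 := by rw [pow_add]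
      _ ≤ (1/2 : ℝ) ^ k * (pr p) ^ 2 :=
          mul_le_mul_of_nonneg_right (pow_le_pow_left₀ h0.le hh k) (sq_nonneg _)
  -- swap k and p
  have step1 : mertensH = ∑' (p : Nat.Primes) (k : ℕ), (pr p) ^ (k + 2) / ((k : ℝ) + 2) := by
    rw [step0, ← Summable.tsum_prod' hψ (fun k => hψ.comp_injective (inj_mk k)),
      ← (Equiv.prodComm Nat.Primes ℕ).tsum_eq
        (fun x : ℕ × Nat.Primes => (pr x.2) ^ (x.1 + 2) / ((x.1 : ℝ) + 2))]
    exact Summable.tsum_prod' (hψ.comp_injective (Equiv.prodComm Nat.Primes ℕ).injective)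
      (fun p => (hψ.comp_injective (Equiv.prodComm Nat.Primes ℕ).injective).comp_injective
        (inj_mk p))
  -- apply the key identity per prime
  have hGsum : Summable (fun y : Nat.Primes × (ℕ × ℕ) => G (pr y.1) y.2) :=
    reorder.summable_iff.mp hΦ
  have step2 : mertensH = ∑' (a : ℕ), ∑' (pb : Nat.Primes × ℕ), Phi (a, pb) := by
    rw [step1]
    have e1 : ∀ p : Nat.Primes, (∑' k : ℕ, (pr p) ^ (k + 2) / ((k : ℝ) + 2))
        = ∑' q : ℕ × ℕ, G (pr p) q :=
      fun p => (hasSum_key (pr_pos p) (pr_lt_one p)).tsum_eq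
    rw [tsum_congr e1,
      ← Summable.tsum_prod' hGsum (fun p => hGsum.comp_injective (inj_mk p)),
      ← reorder.tsum_eq (fun y : Nat.Primes × (ℕ × ℕ) => G (pr y.1) y.2)]
    exact Summable.tsum_prod' hΦ (fun a => hΦ.comp_injective (inj_mk a))
  -- values of the inner sums
  have hc0 : ∀ a : ℕ, a < 2 → (∑' pb : Nat.Primes × ℕ, Phi (a, pb)) = 0 := by
    intro a ha
    have hz : ∀ pb : Nat.Primes × ℕ, Phi (a, pb) = 0 := by
      intro pb
      show G (pr pb.1) (a, pb.2) = 0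
      rw [G, if_neg (by simpa using by omega : ¬ 2 ≤ ((a : ℕ), pb.2).1)]
    rw [tsum_congr hz, tsum_zero]
  have hcval : ∀ n : ℕ, (∑' pb : Nat.Primes × ℕ, Phi (n + 2, pb))
      = -((moebius (n + 2) : ℝ)) * Real.log (∑' m : ℕ, 1 / ((m : ℝ) ^ (n + 2)))
          / ((n : ℝ) + 2) := by
    intro n
    set a := n + 2 with hadef
    have ha : 2 ≤ a := by omega
    by_cases hμ : (moebius a : ℝ) = 0
    · have hz : ∀ pb : Nat.Primes × ℕ, Phi (a, pb) = 0 := by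
        intro pb
        show G (pr pb.1) (a, pb.2) = 0
        simp [G, hμ]
      rw [tsum_congr hz, tsum_zero, hμ]
      simp
    · have hfact : ∀ pb : Nat.Primes × ℕ, Phi (a, pb)
          = (-(moebius a : ℝ) / ((a : ℕ) : ℝ)) * (((pr pb.1) ^ a) ^ pb.2 / (pb.2 : ℝ)) := by
        rintro ⟨p, b⟩
        show G (pr p) (a, b) = _
        rw [G, if_pos (by simpa using ha)]
        rcases Nat.eq_zero_or_pos b with rfl | hb
        · simp
        · simp only
          rw [← pow_mul]
          have hcast : ((a * b : ℕ) : ℝ) = (a : ℝ) * (b : ℝ) := by push_cast; ring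
          rw [hcast]
          have hb0 : ((b : ℕ) : ℝ) ≠ 0 := by positivity
          have ha0 : ((a : ℕ) : ℝ) ≠ 0 := by positivity
          field_simp
      rw [tsum_congr hfact, tsum_mul_left]
      have hC : (-(moebius a : ℝ) / ((a : ℕ) : ℝ)) ≠ 0 := by
        refine div_ne_zero (neg_ne_zero.mpr hμ) ?_
        positivity
      have hΨsum : Summable (fun pb : Nat.Primes × ℕ => ((pr pb.1) ^ a) ^ pb.2 / (pb.2 : ℝ)) := by
        have hs : Summable (fun pb : Nat.Primes × ℕ => Phi (a, pb)) :=
          hΦ.comp_injective (inj_mk a)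
        have h2 := (hs.congr hfact).mul_left (-(moebius a : ℝ) / ((a : ℕ) : ℝ))⁻¹
        refine h2.congr fun pb => ?_
        rw [← mul_assoc, inv_mul_cancel₀ hC, one_mul]
      have hper : ∀ p : Nat.Primes,
          (∑' b : ℕ, ((pr p) ^ a) ^ b / (b : ℝ)) = -Real.log (1 - (pr p) ^ a) := by
        intro p
        have habs : |(pr p) ^ a| < 1 := by
          rw [abs_of_nonneg (pow_nonneg (pr_pos p).le a)]
          exact pow_lt_one₀ (pr_pos p).le (pr_lt_one p) (by omega)
        have h1 := Real.hasSum_pow_div_log_of_abs_lt_one habs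
        have h1' : HasSum (fun j : ℕ => ((pr p) ^ a) ^ (j + 1) / (((j + 1 : ℕ)) : ℝ))
            (-Real.log (1 - (pr p) ^ a)) := by
          have heq : (fun j : ℕ => ((pr p) ^ a) ^ (j + 1) / (((j + 1 : ℕ)) : ℝ))
              = fun j : ℕ => ((pr p) ^ a) ^ (j + 1) / ((j : ℝ) + 1) := by
            funext j; push_cast; rfl
          rw [heq]; exact h1
        have h2 := (hasSum_nat_add_iff
          (f := fun b : ℕ => ((pr p) ^ a) ^ b / (b : ℝ)) 1).mp h1'
        have h3 : (-Real.log (1 - (pr p) ^ a)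
            + ∑ i ∈ Finset.range 1, ((pr p) ^ a) ^ i / (i : ℝ)) = -Real.log (1 - (pr p) ^ a) := by
          simp
        rw [h3] at h2
        exact h2.tsum_eq
      rw [Summable.tsum_prod' hΨsum (fun p => hΨsum.comp_injective (inj_mk p)), tsum_congr hper,
        (hasSum_neg_log_primes ha).tsum_eq]
      have hacast : ((a : ℕ) : ℝ) = (n : ℝ) + 2 := by rw [hadef]; push_cast; ring
      rw [hacast]
      ring
  -- final assembly
  have hcsum : Summable (fun a : ℕ => ∑' pb : Nat.Primes × ℕ, Phi (a, pb)) := hΦ.prod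
  rw [step2, Summable.tsum_eq_zero_add hcsum,
    Summable.tsum_eq_zero_add (f := fun b : ℕ => ∑' pb : Nat.Primes × ℕ, Phi (b + 1, pb))
      (hcsum.comp_injective (add_left_injective 1))]
  rw [hc0 0 (by omega), hc0 1 (by omega), zero_add, zero_add]
  have hfin : ∀ n : ℕ, (∑' pb : Nat.Primes × ℕ, Phi (n + 1 + 1, pb))
      = -((moebius (n + 2) : ℝ)) * Real.log (∑' m : ℕ, 1 / ((m : ℝ) ^ (n + 2)))
          / ((n : ℝ) + 2) := fun n => hcval n
  rw [tsum_congr hfin, ← tsum_neg]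
  exact tsum_congr fun n => by ring
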